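/- Let (λ(n)) be complex numbers satisfying Σ_{n ≤ x} |λ(n)|² = C·x + O(x^{3/5}) for some constant C > 0, and suppose λ(n) = 0 for 1 < n < n₀ where n₀ ≥ 2 and λ(n₀) ≠ 0. Then for every fixed integer m ≥ 1, as σ → 1/2⁺, Σ_{n≥1} |λ(n)|² (log n)^{2m} / n^{2σ} = ((2m)! · n₀ · C / n₀^{2σ}) · (2σ−1)^{−(2m+1)} + O((2σ−1)^{−2m}). -/

import Mathlib

open Real Finset MeasureTheory Set Filter Topology


-- (log t)^k * t^(-a) → 0 at top
lemma wmsa_tendsto (k : ℕ) {a : ℝ} (ha : 0 < a) :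
    Tendsto (fun t : ℝ => Real.log t ^ k * t ^ (-a)) atTop (𝓝 0) := by
  have h := (isLittleO_log_rpow_rpow_atTop (k : ℝ) ha).tendsto_div_nhds_zero
  refine h.congr' ?_
  filter_upwards [eventually_gt_atTop (0:ℝ)] with t ht
  rw [Real.rpow_natCast, Real.rpow_neg ht.le, div_eq_mul_inv]

-- derivative of (log t)^k * t^p
lemma wmsa_hasDerivAt (k : ℕ) (p : ℝ) {t : ℝ} (ht : 0 < t) :
    HasDerivAt (fun u : ℝ => Real.log u ^ k * u ^ p)
      (((k : ℝ) * Real.log t ^ (k - 1) + p * Real.log t ^ k) * t ^ (p - 1)) t := by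
  have h1 : HasDerivAt (fun u : ℝ => Real.log u ^ k)
      ((k : ℝ) * Real.log t ^ (k - 1) * t⁻¹) t := (Real.hasDerivAt_log ht.ne').pow k
  have h2 : HasDerivAt (fun u : ℝ => u ^ p) (p * t ^ (p - 1)) t :=
    Real.hasDerivAt_rpow_const (Or.inl ht.ne')
  have := h1.mul h2
  refine this.congr_deriv ?_
  rw [Real.rpow_sub_one ht.ne']
  field_simp

-- integrability of (log t)^k * t^(-p) on (1,∞), p > 1
lemma wmsa_integrable (k : ℕ) {p : ℝ} (hp : 1 < p) :
    IntegrableOn (fun t : ℝ => Real.log t ^ k * t ^ (-p)) (Set.Ioi 1) := by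
  set q : ℝ := (p + 1) / 2 with hq
  have hq1 : 1 < q := by rw [hq]; linarith
  have hqp : q < p := by rw [hq]; linarith
  set δ : ℝ := (p - q) / (k + 1) with hδ
  have hδ0 : 0 < δ := by
    apply div_pos (by linarith) (by positivity)
  have hmeas : AEStronglyMeasurable (fun t : ℝ => Real.log t ^ k * t ^ (-p))
      (volume.restrict (Set.Ioi 1)) := by
    refine ContinuousOn.aestronglyMeasurable ?_ measurableSet_Ioi
    refine ContinuousOn.mul ?_ ?_
    · exact (Real.continuousOn_log.mono (fun x hx => by
        simp only [Set.mem_compl_iff, Set.mem_singleton_iff]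
        exact ne_of_gt (lt_trans one_pos hx))).pow k
    · exact continuousOn_id.rpow_const (fun x hx => Or.inl (ne_of_gt (lt_trans one_pos hx)))
  refine Integrable.mono' ((integrableOn_Ioi_rpow_of_lt (show -q < -1 by linarith)
      one_pos).const_mul (δ ^ k)⁻¹) hmeas ?_
  filter_upwards [ae_restrict_mem measurableSet_Ioi] with t ht
  have ht1 : (1:ℝ) < t := ht
  have ht0 : (0:ℝ) < t := lt_trans one_pos ht1
  have hlog0 : 0 ≤ Real.log t := Real.log_nonneg ht1.le
  rw [Real.norm_eq_abs, abs_of_nonneg (by positivity)]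
  have h1 : Real.log t ^ k ≤ (δ ^ k)⁻¹ * t ^ (δ * k) := by
    have := Real.log_le_rpow_div ht0.le hδ0
    calc Real.log t ^ k ≤ (t ^ δ / δ) ^ k := by
          exact pow_le_pow_left₀ hlog0 this k
      _ = (δ ^ k)⁻¹ * t ^ (δ * k) := by
          rw [div_pow, ← Real.rpow_natCast (t ^ δ) k, ← Real.rpow_mul ht0.le]
          rw [div_eq_inv_mul]
  calc Real.log t ^ k * t ^ (-p) ≤ ((δ ^ k)⁻¹ * t ^ (δ * k)) * t ^ (-p) := by
        apply mul_le_mul_of_nonneg_right h1 (Real.rpow_nonneg ht0.le _)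
    _ = (δ ^ k)⁻¹ * t ^ (δ * k - p) := by
        rw [mul_assoc, ← Real.rpow_add ht0]; ring_nf
    _ ≤ (δ ^ k)⁻¹ * t ^ (-q) := by
        apply mul_le_mul_of_nonneg_left _ (by positivity)
        apply Real.rpow_le_rpow_of_exponent_le ht1.le
        have : δ * k ≤ p - q := by
          rw [hδ]
          rw [div_mul_eq_mul_div, div_le_iff₀ (by positivity : (0:ℝ) < (k:ℝ)+1)]
          nlinarith [sub_nonneg.mpr hqp.le]
        linarith
lemma wmsa_integral (k : ℕ) {p : ℝ} (hp : 1 < p) :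
    ∫ t in Set.Ioi (1:ℝ), Real.log t ^ k * t ^ (-p)
      = (k.factorial : ℝ) / (p - 1) ^ (k + 1) := by
  have hp0 : p - 1 ≠ 0 := by linarith
  induction k with
  | zero =>
      simp only [pow_zero, one_mul, Nat.factorial_zero, Nat.cast_one]
      rw [integral_Ioi_rpow_of_lt (by linarith) one_pos]
      rw [Real.one_rpow, pow_one, div_eq_div_iff (by linarith) (by linarith)]
      ring
  | succ k ih =>
      -- antiderivative H t = -(log t ^ (k+1) * t ^ (1-p)) / (p-1)
      set H : ℝ → ℝ := fun t => -(Real.log t ^ (k+1) * t ^ (1-p)) / (p-1) with hH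
      set φ : ℝ → ℝ := fun t =>
        -((((k:ℝ)+1) * Real.log t ^ k + (1-p) * Real.log t ^ (k+1)) * t ^ (-p)) / (p-1) with hφ
      have hderiv : ∀ x ∈ Set.Ici (1:ℝ), HasDerivAt H (φ x) x := by
        intro x hx
        have hx0 : (0:ℝ) < x := lt_of_lt_of_le one_pos hx
        have := (wmsa_hasDerivAt (k+1) (1-p) hx0).neg.div_const (p-1)
        have e1 : ((1:ℝ)-p)-1 = -p := by ring
        rw [Nat.add_sub_cancel, e1] at this
        have e2 : φ x = -((((k+1:ℕ):ℝ) * Real.log x ^ k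
            + (1-p) * Real.log x ^ (k+1)) * x ^ (-p)) / (p-1) := by
          simp only [hφ]; push_cast; ring
        rw [e2]
        exact this
      have hint1 : IntegrableOn φ (Set.Ioi 1) := by
        have h1 := (wmsa_integrable k hp).const_mul (-(((k:ℝ)+1)) / (p-1))
        have h2 := (wmsa_integrable (k+1) hp).const_mul (-(1-p) / (p-1))
        refine IntegrableOn.congr_fun (h1.add h2) ?_ measurableSet_Ioi
        intro t ht
        simp only [hφ, Pi.add_apply]
        ring
      have htend : Tendsto H atTop (𝓝 0) := by
        have := (wmsa_tendsto (k+1) (show (0:ℝ) < p - 1 by linarith)).neg.div_const (p-1)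
        simp only [neg_zero, zero_div] at this
        refine this.congr' ?_
        filter_upwards [eventually_gt_atTop (0:ℝ)] with t ht
        rw [hH]
        congr 2
        congr 1
        ring
      have key := integral_Ioi_of_hasDerivAt_of_tendsto' hderiv hint1 htend
      have hH1 : H 1 = 0 := by simp [hH]
      rw [hH1, sub_zero] at key
      -- φ = (-(k+1)/(p-1)) * g_k + g_{k+1}
      have hsplit : ∫ t in Set.Ioi (1:ℝ), φ t
          = (-((k:ℝ)+1)/(p-1)) * ((k.factorial : ℝ) / (p-1)^(k+1))
            + ∫ t in Set.Ioi (1:ℝ), Real.log t ^ (k+1) * t ^ (-p) := by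
        have e : ∀ t ∈ Set.Ioi (1:ℝ), φ t
            = (-((k:ℝ)+1)/(p-1)) * (Real.log t ^ k * t ^ (-p))
              + Real.log t ^ (k+1) * t ^ (-p) := by
          intro t ht
          simp only [hφ]
          field_simp
          ring
        rw [setIntegral_congr_fun measurableSet_Ioi e,
          integral_add ((wmsa_integrable k hp).const_mul _) (wmsa_integrable (k+1) hp),
          integral_const_mul, ih]
      rw [key] at hsplit
      have : ∫ t in Set.Ioi (1:ℝ), Real.log t ^ (k+1) * t ^ (-p)
          = (((k:ℝ)+1)/(p-1)) * ((k.factorial : ℝ) / (p-1)^(k+1)) := by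
        linear_combination -hsplit
      rw [this, Nat.factorial_succ]
      push_cast
      field_simp
      ring

set_option maxHeartbeats 4000000 in
theorem weighted_mean_square_asymptotic (lam : ℕ → ℂ) (C : ℝ) (hC : 0 < C)
    (hrankin : ∃ A : ℝ, ∀ x : ℝ, 1 ≤ x →
      |(∑ n ∈ Finset.Icc 1 ⌊x⌋₊, ‖lam n‖ ^ 2) - C * x| ≤ A * x ^ ((3 : ℝ) / 5))
    (n₀ : ℕ) (hn₀ : 2 ≤ n₀) (hne : lam n₀ ≠ 0)
    (hvanish : ∀ n : ℕ, 1 < n → n < n₀ → lam n = 0)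
    (m : ℕ) (hm : 1 ≤ m) :
    ∃ B : ℝ, 0 < B ∧ ∃ σ₀ : ℝ, 1 / 2 < σ₀ ∧ ∀ σ : ℝ, 1 / 2 < σ → σ < σ₀ →
      |(∑' n : ℕ, ‖lam n‖ ^ 2 * Real.log n ^ (2 * m) / (n : ℝ) ^ (2 * σ)) -
          ((2 * m).factorial : ℝ) * (n₀ : ℝ) * C / (n₀ : ℝ) ^ (2 * σ) /
            (2 * σ - 1) ^ (2 * m + 1)| ≤
        B / (2 * σ - 1) ^ (2 * m) := by
  obtain ⟨A, hA⟩ := hrankin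
  have hA0 : 0 ≤ A := by
    have := hA 1 le_rfl
    have h1 : (1:ℝ) ^ ((3:ℝ)/5) = 1 := Real.one_rpow _
    rw [h1, mul_one, mul_one] at this
    exact le_trans (abs_nonneg _) this
  have h2m : 0 < 2 * m := by omega
  have hlogn₀ : 0 < Real.log n₀ :=
    Real.log_pos (by exact_mod_cast (by omega : 1 < n₀))
  -- the fixed majorant for the error integral
  set M₂ : ℝ → ℝ := fun t => A * ((2*m : ℝ) * Real.log t ^ (2*m-1)
      + 2 * Real.log t ^ (2*m)) * t ^ (-(7/5 : ℝ)) with hM₂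
  have hM₂int : IntegrableOn M₂ (Set.Ioi 1) := by
    have h75 : (1:ℝ) < 7/5 := by norm_num
    have h1 := (wmsa_integrable (2*m-1) h75).const_mul (A * (2*m : ℝ))
    have h2 := (wmsa_integrable (2*m) h75).const_mul (A * 2)
    refine IntegrableOn.congr_fun (h1.add h2) ?_ measurableSet_Ioi
    intro t ht
    simp only [hM₂, Pi.add_apply]
    ring
  set K₁ : ℝ := ∫ t in Set.Ioi (1:ℝ), M₂ t with hK₁
  have hK₁0 : 0 ≤ K₁ := by
    refine setIntegral_nonneg measurableSet_Ioi (fun t ht => ?_)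
    have hlog : 0 ≤ Real.log t := Real.log_nonneg (le_of_lt ht)
    have ht0 : (0:ℝ) < t := lt_trans one_pos ht
    positivity
  refine ⟨C * (2*m).factorial * Real.log n₀ + K₁ + 1, by positivity, 3/4, by norm_num,
    fun σ hσ1 hσ2 => ?_⟩
  set s : ℝ := 2 * σ with hs
  have hs1 : 1 < s := by rw [hs]; linarith
  have hs2 : s < 3/2 := by rw [hs]; linarith
  have hs0 : 0 < s - 1 := by linarith
  -- setup
  set c : ℕ → ℝ := fun n => if n = 0 then 0 else ‖lam n‖ ^ 2 with hc
  have hc0 : c 0 = 0 := by simp [hc]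
  have hcnonneg : ∀ n, 0 ≤ c n := by
    intro n; simp only [hc]; split <;> positivity
  set f : ℝ → ℝ := fun t => Real.log t ^ (2*m) * t ^ (-s) with hf
  set S : ℝ → ℝ := fun t => ∑ k ∈ Finset.Icc 0 ⌊t⌋₊, c k with hSdef
  set df : ℝ → ℝ := fun t => (((2*m : ℕ) : ℝ) * Real.log t ^ (2*m - 1)
      + (-s) * Real.log t ^ (2*m)) * t ^ (-s - 1) with hdfdef
  have hdf : ∀ t : ℝ, 0 < t → HasDerivAt f (df t) t := fun t ht =>
    wmsa_hasDerivAt (2*m) (-s) ht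
  have hderiv_eq : ∀ t : ℝ, 0 < t → deriv f t = df t := fun t ht => (hdf t ht).deriv
  -- sums
  have hceq : ∀ N : ℕ, ∑ k ∈ Finset.Icc 0 N, c k = ∑ n ∈ Finset.Icc 1 N, ‖lam n‖ ^ 2 := by
    intro N
    rw [Finset.sum_eq_sum_sdiff_singleton_add (Finset.mem_Icc.mpr ⟨le_refl 0, Nat.zero_le N⟩) c,
      hc0, add_zero]
    have : Finset.Icc 0 N \ {0} = Finset.Icc 1 N := by
      ext k; simp [Nat.lt_iff_add_one_le]; omega
    rw [this]
    refine Finset.sum_congr rfl (fun k hk => ?_)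
    have : k ≠ 0 := by have := (Finset.mem_Icc.mp hk).1; omega
    simp [hc, this]
  have hS : ∀ t : ℝ, 1 ≤ t → |S t - C * t| ≤ A * t ^ ((3:ℝ)/5) := by
    intro t ht
    rw [hSdef]
    simp only [hceq ⌊t⌋₊]
    exact hA t ht
  have hSb : ∀ t : ℝ, 1 ≤ t → |S t| ≤ (C + A) * t := by
    intro t ht
    have h1 := hS t ht
    have h2 : t ^ ((3:ℝ)/5) ≤ t := by
      nth_rewrite 2 [← Real.rpow_one t]
      exact Real.rpow_le_rpow_of_exponent_le ht (by norm_num)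
    have h3 : |S t| ≤ |S t - C * t| + |C * t| := by
      calc |S t| = |(S t - C * t) + C * t| := by ring_nf
        _ ≤ |S t - C * t| + |C * t| := abs_add_le _ _
    have h4 : |C * t| = C * t := abs_of_nonneg (by nlinarith)
    nlinarith [Real.rpow_nonneg (by linarith : (0:ℝ) ≤ t) ((3:ℝ)/5)]
  -- bound on df
  have hdfbound : ∀ t : ℝ, 1 < t →
      |df t| ≤ ((2*m : ℝ) * Real.log t ^ (2*m-1) + 2 * Real.log t ^ (2*m)) * t ^ (-s-1) := by
    intro t ht
    have ht0 : (0:ℝ) < t := lt_trans one_pos ht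
    have hlog : 0 ≤ Real.log t := Real.log_nonneg ht.le
    have hrp : (0:ℝ) ≤ t ^ (-s-1) := Real.rpow_nonneg ht0.le _
    rw [hdfdef]
    simp only
    rw [abs_mul, abs_of_nonneg hrp]
    refine mul_le_mul_of_nonneg_right ?_ hrp
    rw [abs_le]
    have p1 : (0:ℝ) ≤ Real.log t ^ (2*m-1) := by positivity
    have p2 : (0:ℝ) ≤ Real.log t ^ (2*m) := by positivity
    push_cast
    constructor <;> nlinarith
  -- Abel summation at natural cut-offs
  have habel : ∀ N : ℕ, ∑ k ∈ Finset.Icc 0 N, f k * c k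
      = f N * S N - ∫ t in Set.Ioc (1:ℝ) (N:ℝ), deriv f t * S t := by
    intro N
    have hf_diff : ∀ t ∈ Set.Icc (1:ℝ) (N:ℝ), DifferentiableAt ℝ f t := fun t htt =>
      (hdf t (lt_of_lt_of_le one_pos htt.1)).differentiableAt
    have hdfcont : ContinuousOn df (Set.Icc (1:ℝ) (N:ℝ)) := by
      have hlogc : ContinuousOn Real.log (Set.Icc (1:ℝ) (N:ℝ)) :=
        Real.continuousOn_log.mono (fun x hx => by
          simp only [Set.mem_compl_iff, Set.mem_singleton_iff]
          have := hx.1; intro h; rw [h] at this; linarith)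
      have hrpc : ContinuousOn (fun t : ℝ => t ^ (-s-1)) (Set.Icc (1:ℝ) (N:ℝ)) :=
        continuousOn_id.rpow_const (fun x hx => Or.inl (by
          have h1 := hx.1; simp only [id_eq]; intro h; rw [h] at h1; linarith))
      exact (((continuousOn_const.mul (hlogc.pow _)).add
        (continuousOn_const.mul (hlogc.pow _))).mul hrpc)
    have hf_int : IntegrableOn (deriv f) (Set.Icc (1:ℝ) (N:ℝ)) := by
      refine IntegrableOn.congr_fun (hdfcont.integrableOn_Icc) ?_ measurableSet_Icc
      exact fun t htt => (hderiv_eq t (lt_of_lt_of_le one_pos htt.1)).symm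
    have := sum_mul_eq_sub_integral_mul₀ c hc0 (N:ℝ) hf_diff hf_int
    rw [Nat.floor_natCast] at this
    simp only [hSdef, Nat.floor_natCast]
    exact this
  -- integrability of the boundary integrand on (1,∞)
  set M₁ : ℝ → ℝ := fun t => (C + A) * ((2*m : ℝ) * Real.log t ^ (2*m-1)
      + 2 * Real.log t ^ (2*m)) * t ^ (-s) with hM₁
  have hM₁int : IntegrableOn M₁ (Set.Ioi 1) := by
    have h1 := (wmsa_integrable (2*m-1) hs1).const_mul ((C + A) * (2*m : ℝ))
    have h2 := (wmsa_integrable (2*m) hs1).const_mul ((C + A) * 2)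
    refine IntegrableOn.congr_fun (h1.add h2) ?_ measurableSet_Ioi
    intro t ht
    simp only [hM₁, Pi.add_apply]
    ring
  have hgbound : ∀ t ∈ Set.Ioi (1:ℝ), ‖deriv f t * S t‖ ≤ M₁ t := by
    intro t ht
    have ht1 : (1:ℝ) < t := ht
    have ht0 : (0:ℝ) < t := lt_trans one_pos ht1
    have hlog : 0 ≤ Real.log t := Real.log_nonneg ht1.le
    rw [Real.norm_eq_abs, abs_mul, hderiv_eq t ht0]
    have hb1 := hdfbound t ht1
    have hb2 := hSb t ht1.le
    have hnn : (0:ℝ) ≤ (2*m : ℝ) * Real.log t ^ (2*m-1) + 2 * Real.log t ^ (2*m) := by positivity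
    calc |df t| * |S t|
        ≤ (((2*m : ℝ) * Real.log t ^ (2*m-1) + 2 * Real.log t ^ (2*m)) * t ^ (-s-1))
            * ((C + A) * t) := by
          refine mul_le_mul hb1 hb2 (abs_nonneg _) ?_
          positivity
      _ = M₁ t := by
          rw [hM₁]
          have : t ^ (-s-1) * t = t ^ (-s) := by
            nth_rewrite 2 [← Real.rpow_one t]
            rw [← Real.rpow_add ht0]
            ring_nf
          calc (((2*m : ℝ) * Real.log t ^ (2*m-1) + 2 * Real.log t ^ (2*m)) * t ^ (-s-1))
              * ((C + A) * t)
              = (C + A) * ((2*m : ℝ) * Real.log t ^ (2*m-1) + 2 * Real.log t ^ (2*m))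
                * (t ^ (-s-1) * t) := by ring
            _ = _ := by rw [this]
  have hgmeas : AEStronglyMeasurable (fun t => deriv f t * S t)
      (volume.restrict (Set.Ioi 1)) := by
    refine Measurable.aestronglyMeasurable ?_
    have hSmeas : Measurable S := by
      rw [hSdef]
      exact (measurable_from_nat (f := fun n : ℕ => ∑ k ∈ Finset.Icc 0 n, c k)).comp
        Nat.measurable_floor
    exact (measurable_deriv f).mul hSmeas
  have hgint : IntegrableOn (fun t => deriv f t * S t) (Set.Ioi 1) := by
    refine Integrable.mono' hM₁int hgmeas ?_
    filter_upwards [ae_restrict_mem measurableSet_Ioi] with t ht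
    exact hgbound t ht
  -- limit of boundary term
  have hfS0 : Tendsto (fun N : ℕ => f N * S N) atTop (𝓝 0) := by
    have htd : Tendsto (fun t : ℝ => (C + A) * (Real.log t ^ (2*m) * t ^ (-(s-1))))
        atTop (𝓝 ((C+A) * 0)) := (wmsa_tendsto (2*m) hs0).const_mul (C+A)
    rw [mul_zero] at htd
    have htd2 := htd.comp tendsto_natCast_atTop_atTop (α := ℕ)
    refine squeeze_zero_norm' ?_ htd2
    filter_upwards [eventually_ge_atTop 1] with N hN
    have hN1 : (1:ℝ) ≤ (N:ℝ) := by exact_mod_cast hN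
    have hN0 : (0:ℝ) < (N:ℝ) := lt_of_lt_of_le one_pos hN1
    have hfN : (0:ℝ) ≤ f N := by
      rw [hf]
      have := Real.log_natCast_nonneg N
      positivity
    rw [Real.norm_eq_abs, abs_mul, abs_of_nonneg hfN]
    have hSN := hSb N hN1
    calc f N * |S N| ≤ f N * ((C + A) * N) :=
          mul_le_mul_of_nonneg_left hSN hfN
      _ = (C + A) * (Real.log N ^ (2*m) * ((N:ℝ) ^ (-s) * N)) := by rw [hf]; ring
      _ = Function.comp (fun t : ℝ => (C + A) * (Real.log t ^ (2*m) * t ^ (-(s-1))))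
            (fun N : ℕ => (N:ℝ)) N := by
          simp only [Function.comp]
          congr 2
          nth_rewrite 2 [← Real.rpow_one (N:ℝ)]
          rw [← Real.rpow_add hN0]
          ring_nf
  -- limit of the integral
  have hUnion : ⋃ N : ℕ, Set.Ioc (1:ℝ) (N:ℝ) = Set.Ioi 1 := by
    ext x
    simp only [Set.mem_iUnion, Set.mem_Ioc, Set.mem_Ioi]
    constructor
    · rintro ⟨N, h1, _⟩; exact h1
    · intro hx
      obtain ⟨N, hN⟩ := exists_nat_ge x
      exact ⟨N, hx, hN⟩
  have hIoc : Tendsto (fun N : ℕ => ∫ t in Set.Ioc (1:ℝ) (N:ℝ), deriv f t * S t) atTop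
      (𝓝 (∫ t in Set.Ioi (1:ℝ), deriv f t * S t)) := by
    have := tendsto_setIntegral_of_monotone (s := fun N : ℕ => Set.Ioc (1:ℝ) (N:ℝ))
      (fun N => measurableSet_Ioc)
      (fun i j hij => Set.Ioc_subset_Ioc_right (by exact_mod_cast hij))
      (by rw [hUnion]; exact hgint)
    rwa [hUnion] at this
  -- the terms of the series
  have hterm : ∀ n : ℕ, ‖lam n‖ ^ 2 * Real.log n ^ (2*m) / (n : ℝ) ^ s = f n * c n := by
    intro n
    match n with
    | 0 =>
        simp only [Nat.cast_zero, Real.log_zero, zero_pow (by omega : 2*m ≠ 0), mul_zero,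
          zero_div, hc0, mul_zero]
    | (n+1) =>
        have hn0 : (0:ℝ) < ((n+1 : ℕ) : ℝ) := by positivity
        have : c (n+1) = ‖lam (n+1)‖ ^ 2 := by simp [hc]
        rw [this]
        simp only [hf]
        rw [Real.rpow_neg hn0.le, div_eq_mul_inv]
        ring
  have htermnonneg : ∀ n : ℕ, 0 ≤ ‖lam n‖ ^ 2 * Real.log n ^ (2*m) / (n : ℝ) ^ s := by
    intro n
    have h1 := Real.log_natCast_nonneg n
    have h2 : (0:ℝ) ≤ (n:ℝ) ^ s := Real.rpow_nonneg (Nat.cast_nonneg n) _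
    positivity
  have hfcnonneg : ∀ k : ℕ, 0 ≤ f k * c k := by
    intro k
    rw [← hterm k]
    exact htermnonneg k
  -- boundedness of partial sums
  obtain ⟨b, hb⟩ : ∃ b : ℝ, ∀ N : ℕ, f N * S N ≤ b := by
    obtain ⟨b, hb⟩ := hfS0.bddAbove_range
    exact ⟨b, fun N => hb (Set.mem_range_self N)⟩
  have habs_int_le : ∀ N : ℕ, |∫ t in Set.Ioc (1:ℝ) (N:ℝ), deriv f t * S t|
      ≤ ∫ t in Set.Ioi (1:ℝ), M₁ t := by
    intro N
    have hsub : Set.Ioc (1:ℝ) (N:ℝ) ⊆ Set.Ioi 1 := Set.Ioc_subset_Ioi_self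
    have hgsub : IntegrableOn (fun t => deriv f t * S t) (Set.Ioc (1:ℝ) (N:ℝ)) :=
      hgint.mono_set hsub
    calc |∫ t in Set.Ioc (1:ℝ) (N:ℝ), deriv f t * S t|
        ≤ ∫ t in Set.Ioc (1:ℝ) (N:ℝ), ‖deriv f t * S t‖ := by
          rw [← Real.norm_eq_abs]
          exact norm_integral_le_integral_norm _
      _ ≤ ∫ t in Set.Ioc (1:ℝ) (N:ℝ), M₁ t := by
          refine setIntegral_mono_on hgsub.norm (hM₁int.mono_set hsub) measurableSet_Ioc ?_
          exact fun t ht => hgbound t (hsub ht)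
      _ ≤ ∫ t in Set.Ioi (1:ℝ), M₁ t := by
          refine setIntegral_mono_set hM₁int ?_ (HasSubset.Subset.eventuallyLE hsub)
          filter_upwards [ae_restrict_mem measurableSet_Ioi] with t ht
          have ht0 : (0:ℝ) < t := lt_trans one_pos ht
          have hlog : 0 ≤ Real.log t := Real.log_nonneg (le_of_lt ht)
          simp only [hM₁]
          positivity
  have hsummable : Summable (fun n : ℕ => ‖lam n‖ ^ 2 * Real.log n ^ (2*m) / (n : ℝ) ^ s) := by
    refine summable_of_sum_range_le (c := b + ∫ t in Set.Ioi (1:ℝ), M₁ t) htermnonneg ?_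
    intro n
    have h1 : ∑ i ∈ Finset.range n, ‖lam i‖ ^ 2 * Real.log i ^ (2*m) / (i : ℝ) ^ s
        ≤ ∑ k ∈ Finset.Icc 0 n, f k * c k := by
      simp_rw [hterm]
      refine Finset.sum_le_sum_of_subset_of_nonneg ?_ (fun k _ _ => hfcnonneg k)
      intro k hk
      simp only [Finset.mem_range] at hk
      simp only [Finset.mem_Icc]
      omega
    rw [habel n] at h1
    have h2 := habs_int_le n
    have h3 := hb n
    calc ∑ i ∈ Finset.range n, ‖lam i‖ ^ 2 * Real.log i ^ (2*m) / (i : ℝ) ^ s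
        ≤ f n * S n - ∫ t in Set.Ioc (1:ℝ) (n:ℝ), deriv f t * S t := h1
      _ ≤ b + ∫ t in Set.Ioi (1:ℝ), M₁ t := by
          have := abs_le.mp h2
          linarith
  -- identify the tsum
  have htsum_val : (∑' n : ℕ, ‖lam n‖ ^ 2 * Real.log n ^ (2*m) / (n : ℝ) ^ s)
      = - ∫ t in Set.Ioi (1:ℝ), deriv f t * S t := by
    have hlim1 : Tendsto (fun N : ℕ => ∑ k ∈ Finset.Icc 0 N, f k * c k) atTop
        (𝓝 (0 - ∫ t in Set.Ioi (1:ℝ), deriv f t * S t)) := by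
      have := hfS0.sub hIoc
      refine this.congr (fun N => (habel N).symm)
    have hlim2 : Tendsto (fun N : ℕ => ∑ k ∈ Finset.Icc 0 N, f k * c k) atTop
        (𝓝 (∑' n : ℕ, ‖lam n‖ ^ 2 * Real.log n ^ (2*m) / (n : ℝ) ^ s)) := by
      have hbase := hsummable.hasSum.tendsto_sum_nat
      have hcomp := hbase.comp (tendsto_add_atTop_nat 1)
      refine hcomp.congr (fun N => ?_)
      simp only [Function.comp]
      rw [← Finset.Ico_add_one_right_eq_Icc, Nat.Ico_zero_eq_range]
      refine Finset.sum_congr rfl (fun k _ => (hterm k))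
    have := tendsto_nhds_unique hlim2 hlim1
    rw [this, zero_sub]
  -- evaluate the main integral
  set F : ℝ := ((2*m).factorial : ℝ) with hF
  have hFpos : 0 < F := by rw [hF]; exact_mod_cast Nat.factorial_pos _
  have hfac : F = (2*m : ℝ) * ((2*m-1).factorial : ℝ) := by
    rw [hF]
    exact_mod_cast (Nat.mul_factorial_pred h2m.ne').symm
  have hsne : s - 1 ≠ 0 := ne_of_gt hs0
  have hdfCt_int : IntegrableOn (fun t => df t * (C * t)) (Set.Ioi 1) := by
    have h1 := (wmsa_integrable (2*m-1) hs1).const_mul (C * (2*m : ℝ))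
    have h2 := (wmsa_integrable (2*m) hs1).const_mul (C * (-s))
    refine IntegrableOn.congr_fun (h1.add h2) ?_ measurableSet_Ioi
    intro t ht
    have ht0 : (0:ℝ) < t := lt_trans one_pos ht
    have htt : t ^ (-s-1) * t = t ^ (-s) := by
      nth_rewrite 2 [← Real.rpow_one t]
      rw [← Real.rpow_add ht0]; ring_nf
    simp only [Pi.add_apply, hdfdef]
    push_cast
    calc C * (2*↑m) * (Real.log t ^ (2*m-1) * t ^ (-s)) + C * (-s) * (Real.log t ^ (2*m) * t ^ (-s))
        = ((2*↑m) * Real.log t ^ (2*m-1) + (-s) * Real.log t ^ (2*m)) * (t ^ (-s-1) * t) * C := by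
          rw [htt]; ring
      _ = ((2*↑m) * Real.log t ^ (2*m-1) + (-s) * Real.log t ^ (2*m)) * t ^ (-s-1) * (C * t) := by
          ring
  have hdfCt_val : ∫ t in Set.Ioi (1:ℝ), df t * (C * t) = -(C * F / (s-1)^(2*m+1)) := by
    have h1 := (wmsa_integrable (2*m-1) hs1).const_mul (C * (2*m : ℝ))
    have h2 := (wmsa_integrable (2*m) hs1).const_mul (C * (-s))
    have heq : ∀ t ∈ Set.Ioi (1:ℝ), df t * (C * t)
        = C * (2*m : ℝ) * (Real.log t ^ (2*m-1) * t ^ (-s))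
          + C * (-s) * (Real.log t ^ (2*m) * t ^ (-s)) := by
      intro t ht
      have ht0 : (0:ℝ) < t := lt_trans one_pos ht
      have htt : t ^ (-s-1) * t = t ^ (-s) := by
        nth_rewrite 2 [← Real.rpow_one t]
        rw [← Real.rpow_add ht0]; ring_nf
      simp only [hdfdef]
      push_cast
      rw [← htt]
      ring
    rw [setIntegral_congr_fun measurableSet_Ioi heq, integral_add h1 h2,
      integral_const_mul, integral_const_mul, wmsa_integral (2*m-1) hs1,
      wmsa_integral (2*m) hs1]
    have he1 : 2*m - 1 + 1 = 2*m := by omega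
    have hfac' : ((2*m).factorial : ℝ) = (2*m : ℝ) * ((2*m-1).factorial : ℝ) := by
      exact_mod_cast (Nat.mul_factorial_pred h2m.ne').symm
    rw [he1, hfac, hfac']
    field_simp
    ring
  have hgIoi : IntegrableOn (fun t => df t * S t) (Set.Ioi 1) := by
    refine IntegrableOn.congr_fun hgint ?_ measurableSet_Ioi
    exact fun t ht => by rw [hderiv_eq t (lt_trans one_pos ht)]
  have hE_int : IntegrableOn (fun t => df t * (S t - C * t)) (Set.Ioi 1) := by
    refine IntegrableOn.congr_fun (hgIoi.sub hdfCt_int) ?_ measurableSet_Ioi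
    intro t ht
    simp only [Pi.sub_apply]
    ring
  set IE : ℝ := ∫ t in Set.Ioi (1:ℝ), df t * (S t - C * t) with hIEdef
  have hIg_split : ∫ t in Set.Ioi (1:ℝ), deriv f t * S t
      = (∫ t in Set.Ioi (1:ℝ), df t * (C * t)) + IE := by
    rw [hIEdef, ← integral_add hdfCt_int hE_int]
    refine setIntegral_congr_fun measurableSet_Ioi (fun t ht => ?_)
    rw [hderiv_eq t (lt_trans one_pos ht)]
    ring
  -- bound the error integral
  have hE_bound : |IE| ≤ K₁ := by
    rw [hIEdef, hK₁, ← Real.norm_eq_abs]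
    calc ‖∫ t in Set.Ioi (1:ℝ), df t * (S t - C * t)‖
        ≤ ∫ t in Set.Ioi (1:ℝ), ‖df t * (S t - C * t)‖ := norm_integral_le_integral_norm _
      _ ≤ ∫ t in Set.Ioi (1:ℝ), M₂ t := by
          refine setIntegral_mono_on hE_int.norm hM₂int measurableSet_Ioi ?_
          intro t ht
          have ht1 : (1:ℝ) < t := ht
          have ht0 : (0:ℝ) < t := lt_trans one_pos ht1
          have hlog : 0 ≤ Real.log t := Real.log_nonneg ht1.le
          have h35 : (0:ℝ) ≤ t ^ ((3:ℝ)/5) := Real.rpow_nonneg ht0.le _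
          have hb1 := hdfbound t ht1
          have hb2 := hS t ht1.le
          have hnn : (0:ℝ) ≤ (2*m : ℝ) * Real.log t ^ (2*m-1) + 2 * Real.log t ^ (2*m) := by
            positivity
          rw [Real.norm_eq_abs, abs_mul]
          calc |df t| * |S t - C * t|
              ≤ (((2*m : ℝ) * Real.log t ^ (2*m-1) + 2 * Real.log t ^ (2*m)) * t ^ (-s-1))
                  * (A * t ^ ((3:ℝ)/5)) := by
                refine mul_le_mul hb1 hb2 (abs_nonneg _) ?_
                positivity
            _ = A * ((2*m : ℝ) * Real.log t ^ (2*m-1) + 2 * Real.log t ^ (2*m))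
                  * (t ^ (-s-1) * t ^ ((3:ℝ)/5)) := by ring
            _ ≤ M₂ t := by
                simp only [hM₂]
                refine mul_le_mul_of_nonneg_left ?_ (by positivity)
                rw [← Real.rpow_add ht0]
                exact Real.rpow_le_rpow_of_exponent_le ht1.le (by linarith)
      _ = K₁ := hK₁.symm
  -- final computation
  have hn₀1 : (1:ℝ) ≤ (n₀ : ℝ) := by exact_mod_cast (by omega : 1 ≤ n₀)
  have hn₀pos : (0:ℝ) < (n₀ : ℝ) := lt_of_lt_of_le one_pos hn₀1
  set x : ℝ := (n₀ : ℝ) ^ (1 - s) with hx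
  have hx1 : x ≤ 1 := Real.rpow_le_one_of_one_le_of_nonpos hn₀1 (by linarith)
  have hx2 : 1 - x ≤ (s - 1) * Real.log n₀ := by
    have : x = Real.exp (Real.log n₀ * (1 - s)) := by
      rw [hx, Real.rpow_def_of_pos hn₀pos]
    have h3 := Real.add_one_le_exp (Real.log n₀ * (1 - s))
    nlinarith
  have hMain : F * (n₀ : ℝ) * C / (n₀ : ℝ) ^ s / (s-1)^(2*m+1)
      = C * F * x / (s-1)^(2*m+1) := by
    have hns : (0:ℝ) < (n₀ : ℝ) ^ s := Real.rpow_pos_of_pos hn₀pos _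
    rw [hx, Real.rpow_sub hn₀pos, Real.rpow_one]
    field_simp
  rw [htsum_val, hIg_split, hdfCt_val, hMain]
  have hrw : -(-(C * F / (s-1)^(2*m+1)) + IE) - C * F * x / (s-1)^(2*m+1)
      = C * F * (1 - x) / (s-1)^(2*m+1) - IE := by ring
  rw [hrw]
  have hpowpos : (0:ℝ) < (s-1)^(2*m) := pow_pos hs0 _
  have hpowpos1 : (0:ℝ) < (s-1)^(2*m+1) := pow_pos hs0 _
  have hx0 : 0 ≤ 1 - x := by linarith
  have step1 : |C * F * (1 - x) / (s-1)^(2*m+1) - IE|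
      ≤ C * F * (1 - x) / (s-1)^(2*m+1) + |IE| := by
    refine le_trans (abs_sub _ _) ?_
    gcongr
    rw [abs_of_nonneg (by positivity)]
  have step2 : C * F * (1 - x) / (s-1)^(2*m+1) ≤ C * F * Real.log n₀ / (s-1)^(2*m) := by
    rw [pow_succ]
    rw [div_le_div_iff₀ (by positivity) hpowpos]
    calc C * F * (1 - x) * (s-1)^(2*m)
        ≤ C * F * ((s-1) * Real.log n₀) * (s-1)^(2*m) := by
          refine mul_le_mul_of_nonneg_right ?_ (le_of_lt hpowpos)
          exact mul_le_mul_of_nonneg_left hx2 (by positivity)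
      _ = C * F * Real.log n₀ * ((s-1)^(2*m) * (s-1)) := by ring
  have hpow_le1 : (s-1)^(2*m) ≤ 1 := pow_le_one₀ (le_of_lt hs0) (by linarith)
  have step3 : C * F * Real.log n₀ / (s-1)^(2*m) + K₁
      ≤ (C * F * Real.log n₀ + K₁ + 1) / (s-1)^(2*m) := by
    rw [div_add' _ _ _ (ne_of_gt hpowpos), div_le_div_iff₀ hpowpos hpowpos]
    have : K₁ * (s-1)^(2*m) ≤ K₁ := by
      nth_rewrite 2 [← mul_one K₁]
      exact mul_le_mul_of_nonneg_left hpow_le1 hK₁0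
    nlinarith
  calc |C * F * (1 - x) / (s-1)^(2*m+1) - IE|
      ≤ C * F * (1 - x) / (s-1)^(2*m+1) + |IE| := step1
    _ ≤ C * F * Real.log n₀ / (s-1)^(2*m) + K₁ := by
        have := hE_bound
        linarith [step2]
    _ ≤ (C * F * Real.log n₀ + K₁ + 1) / (s-1)^(2*m) := step3
    _ = (C * ((2*m).factorial : ℝ) * Real.log n₀ + K₁ + 1) / (s-1)^(2*m) := by rw [hF]
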